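/- Immediate always-taker potential-outcome means: under Independence, Monotonicity, and absorbing treatment, for each wave w ∈ {1,...,w̄} with P(T_1 = 1, Z = 0) > 0, E[Y_w(w) | T_1(1) = T_1(0) = 1] = E[Y_w | T_1 = 1, Z = 0]. -/

import Mathlib

open MeasureTheory ProbabilityTheory Finset

/-- Conditional mean `E[X | A]`: the expectation of `X` under `P` conditioned on the event `A`. -/
noncomputable def cmean {Ω : Type*} [MeasurableSpace Ω] (P : MeasureTheory.Measure Ω)
    (A : Set Ω) (X : Ω → ℝ) : ℝ :=
  ∫ ω, X ω ∂(P[|A])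

theorem immediate_always_taker_potential_outcome_means
    {Ω : Type*} [MeasurableSpace Ω] (P : MeasureTheory.Measure Ω) [IsProbabilityMeasure P]
    (Z : Ω → ℕ) (hZmeas : Measurable Z) (hZbin : ∀ ω, Z ω ≤ 1)
    (hZpos : 0 < P {ω | Z ω = 1}) (hZlt : P {ω | Z ω = 1} < 1)
    (wbar : ℕ) (hwbar : 1 ≤ wbar)
    (T : ℕ → ℕ → Ω → ℕ) (hTmeas : ∀ w z, Measurable (T w z))
    (hTrange : ∀ w ∈ Set.Icc 1 wbar, ∀ z ≤ 1, ∀ ω, T w z ω ≤ w)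
    (Y : ℕ → ℕ → Ω → ℝ) (hYmeas : ∀ w t, Measurable (Y w t))
    (hYint : ∀ w ∈ Set.Icc 1 wbar, ∀ t ≤ w, MeasureTheory.Integrable (Y w t) P)
    (hAbs : ∀ z ≤ 1, ∀ w, 1 ≤ w → w < wbar → ∀ ω,
      (1 ≤ T w z ω → T (w + 1) z ω = T w z ω + 1) ∧
      (T w z ω = 0 → T (w + 1) z ω ≤ 1))
    (hIndep : ∀ w ∈ Set.Icc 1 wbar,
      IndepFun (fun ω => ((fun t : ℕ => Y w t ω), T w 1 ω, T w 0 ω)) Z P)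
    (hMono : ∀ w ∈ Set.Icc 1 wbar, ∀ᵐ ω ∂P, T w 0 ω ≤ T w 1 ω) :
    ∀ w ∈ Set.Icc 1 wbar,
      0 < P {ω | T 1 (Z ω) ω = 1 ∧ Z ω = 0} →
      cmean P {ω | T 1 1 ω = 1 ∧ T 1 0 ω = 1} (fun ω => Y w w ω)
        = cmean P {ω | T 1 (Z ω) ω = 1 ∧ Z ω = 0} (fun ω => Y w (T w (Z ω) ω) ω) := by
  intro w hw hpos
  obtain ⟨hw1, hwb⟩ := hw
  -- pointwise characterization of immediate always-takers via absorbing treatment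
  have key : ∀ ω, ∀ v, 1 ≤ v → v ≤ wbar →
      ((T 1 0 ω = 1 → T v 0 ω = v) ∧ (T 1 0 ω = 0 → T v 0 ω < v)) := by
    intro ω v
    induction v with
    | zero => omega
    | succ n ih =>
      intro hv1 hvb
      rcases Nat.lt_or_ge n 1 with h | hn1
      · have hn0 : n = 0 := by omega
        subst hn0
        norm_num
      · have ih' := ih hn1 (by omega)
        have habs := hAbs 0 (by norm_num) n hn1 (by omega) ω
        constructor
        · intro h1
          have hTn := ih'.1 h1
          rw [habs.1 (by omega), hTn]
        · intro h0
          have hlt := ih'.2 h0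
          by_cases hz : T n 0 ω = 0
          · have := habs.2 hz; omega
          · have := habs.1 (by omega); omega
  have tchar : ∀ ω, (T w 0 ω = w ↔ T 1 0 ω = 1) := by
    intro ω
    have k := key ω w hw1 hwb
    have hr : T 1 0 ω ≤ 1 := hTrange 1 ⟨le_refl 1, hwbar⟩ 0 (by norm_num) ω
    constructor
    · intro h
      by_contra hne
      have h0 : T 1 0 ω = 0 := by omega
      have := k.2 h0; omega
    · exact k.1
  set X : Ω → ℝ := fun ω => Y w w ω with hX
  set C : Set Ω := {ω | T w 0 ω = w} with hC
  set D : Set Ω := {ω | Z ω = 0} with hD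
  have hCmeas : MeasurableSet C := hTmeas w 0 (measurableSet_singleton w)
  have hDmeas : MeasurableSet D := hZmeas (measurableSet_singleton 0)
  -- the observed event equals C ∩ D
  have hB : {ω | T 1 (Z ω) ω = 1 ∧ Z ω = 0} = C ∩ D := by
    ext ω
    simp only [Set.mem_setOf_eq, Set.mem_inter_iff, hC, hD]
    constructor
    · rintro ⟨h1, h0⟩
      rw [h0] at h1
      exact ⟨(tchar ω).mpr h1, h0⟩
    · rintro ⟨h1, h0⟩
      rw [h0]
      exact ⟨(tchar ω).mp h1, rfl⟩
  rw [hB] at hpos ⊢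
  -- positivity facts
  have hPCD_le_D : P (C ∩ D) ≤ P D := measure_mono Set.inter_subset_right
  have hPD_pos : 0 < P D := lt_of_lt_of_le hpos hPCD_le_D
  have hPC_pos : 0 < P C := lt_of_lt_of_le hpos (measure_mono Set.inter_subset_left)
  have hPD_ne_top : P D ≠ ⊤ := measure_ne_top P D
  have hPC_ne_top : P C ≠ ⊤ := measure_ne_top P C
  -- the always-taker event is a.e. equal to C
  have hAC : {ω | T 1 1 ω = 1 ∧ T 1 0 ω = 1} =ᵐ[P] C := by
    have hm := hMono 1 ⟨le_refl 1, hwbar⟩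
    rw [Filter.eventuallyEq_set]
    filter_upwards [hm] with ω hω
    simp only [Set.mem_setOf_eq, hC, tchar ω]
    have hr : T 1 1 ω ≤ 1 := hTrange 1 ⟨le_refl 1, hwbar⟩ 1 (by norm_num) ω
    constructor
    · exact fun h => h.2
    · intro h
      exact ⟨by omega, h⟩
  -- replace the LHS conditioning event by C
  have hcondAC : P[|{ω | T 1 1 ω = 1 ∧ T 1 0 ω = 1}] = P[|C] := by
    unfold ProbabilityTheory.cond
    rw [measure_congr hAC, Measure.restrict_congr_set hAC]
  -- replace the RHS integrand by X on C ∩ D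
  have hRHS : cmean P (C ∩ D) (fun ω => Y w (T w (Z ω) ω) ω) = cmean P (C ∩ D) X := by
    unfold cmean ProbabilityTheory.cond
    refine integral_congr_ae ?_
    refine Measure.ae_smul_measure ?_ _
    filter_upwards [ae_restrict_mem (hCmeas.inter hDmeas)] with ω hω
    obtain ⟨h1, h0⟩ := hω
    have hz : Z ω = 0 := h0
    have ht : T w 0 ω = w := h1
    simp [hz, ht, hX]
  rw [hRHS]
  unfold cmean
  rw [hcondAC]
  -- now use independence
  have hind := hIndep w ⟨hw1, hwb⟩
  -- independence of (T w 0) and Z gives the product formula for P (C ∩ D)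
  have hindT : IndepFun (fun ω => T w 0 ω) Z P := by
    have hφ : Measurable fun p : (ℕ → ℝ) × ℕ × ℕ => p.2.2 :=
      measurable_snd.snd
    exact hind.comp hφ measurable_id
  have hPCD : P (C ∩ D) = P C * P D := by
    have := hindT.measure_inter_preimage_eq_mul {w} {0}
      (measurableSet_singleton w) (measurableSet_singleton 0)
    simpa [Set.preimage, hC, hD] using this
  -- independence of (X · 1_C) and 1_D
  set f : Ω → ℝ := fun ω => X ω * (if T w 0 ω = w then (1:ℝ) else 0) with hf
  set g : Ω → ℝ := fun ω => if Z ω = 0 then (1:ℝ) else 0 with hg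
  have hfg : IndepFun f g P := by
    have hφ : Measurable fun p : (ℕ → ℝ) × ℕ × ℕ =>
        p.1 w * (if p.2.2 = w then (1:ℝ) else 0) := by
      refine ((measurable_pi_apply w).comp measurable_fst).mul ?_
      refine Measurable.ite ?_ measurable_const measurable_const
      exact measurable_snd.snd (measurableSet_singleton w)
    exact hind.comp hφ (measurable_from_nat (f := fun n => if n = 0 then (1:ℝ) else 0))
  have hfmeas : Measurable f := by
    refine (hYmeas w w).mul ?_
    exact Measurable.ite (hTmeas w 0 (measurableSet_singleton w)) measurable_const
      measurable_const
  have hgmeas : Measurable g := by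
    exact Measurable.ite (hZmeas (measurableSet_singleton 0)) measurable_const measurable_const
  have hmul := hfg.integral_mul_eq_mul_integral hfmeas.aestronglyMeasurable hgmeas.aestronglyMeasurable
  -- identify the integrals
  have hfC : f = Set.indicator C X := by
    funext ω
    by_cases h : T w 0 ω = w
    · simp [hf, h, Set.indicator_of_mem, hC, Set.mem_setOf_eq, h]
    · simp [hf, h, hC, Set.indicator_of_notMem, Set.mem_setOf_eq]
  have hfgCD : (f * g) = Set.indicator (C ∩ D) X := by
    funext ω
    by_cases h1 : T w 0 ω = w <;> by_cases h2 : Z ω = 0 <;>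
      simp [hf, hg, h1, h2, hC, hD, Set.indicator_apply, Set.mem_setOf_eq]
  have hgint : ∫ ω, g ω ∂P = (P D).toReal := by
    have : g = Set.indicator D (fun _ => (1:ℝ)) := by
      funext ω
      by_cases h : Z ω = 0 <;> simp [hg, h, hD, Set.indicator_apply, Set.mem_setOf_eq]
    rw [this, integral_indicator hDmeas]
    simp [measureReal_def]
  have hfint : ∫ ω, f ω ∂P = ∫ ω in C, X ω ∂P := by
    rw [hfC, integral_indicator hCmeas]
  have hfgint : ∫ ω, (f * g) ω ∂P = ∫ ω in C ∩ D, X ω ∂P := by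
    rw [hfgCD, integral_indicator (hCmeas.inter hDmeas)]
  rw [hfgint, hfint, hgint] at hmul
  -- finish by computing both conditional means
  unfold ProbabilityTheory.cond
  rw [integral_smul_measure, integral_smul_measure, hmul, hPCD]
  have hPD0 : (P D).toReal ≠ 0 := by
    simp [ENNReal.toReal_ne_zero, hPD_pos.ne', hPD_ne_top]
  rw [ENNReal.toReal_inv, ENNReal.toReal_inv, ENNReal.toReal_mul, mul_inv]
  simp only [smul_eq_mul]
  field_simp
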